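/- Fix a dimension d ≥ 1, R > 0, r ≥ 0 and a nonempty compact set K₀ ⊆ ℝ^d. The set S₂ = {K ∈ 𝒦 : K₀ ⊆ cthickening_r(K ∩ closedBall(0,R))} is closed in 𝒦, where cthickening_r(S) = {x ∈ ℝ^d : dist(x, S) ≤ r} is the closed r-thickening of S. -/

import Mathlib

open TopologicalSpace Metric

/-- Step in Lemma 2.1(a): `S₂ = {K : K₀ ⊆ cthickening_r (K ∩ closedBall(0,R))}` is closed. -/
theorem stmt11 (d : ℕ) (hd : 1 ≤ d) (R r : ℝ) (hR : 0 < R) (hr : 0 ≤ r)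
    (K₀ : Set (EuclideanSpace ℝ (Fin d))) (hK₀c : IsCompact K₀) (hK₀ne : K₀.Nonempty) :
    IsClosed {K : NonemptyCompacts (EuclideanSpace ℝ (Fin d)) |
      K₀ ⊆ Metric.cthickening r
        ((K : Set (EuclideanSpace ℝ (Fin d))) ∩ Metric.closedBall 0 R)} := by
  rw [← isSeqClosed_iff_isClosed]
  intro Ks K hmem hK x hx
  have hclosed : ∀ n, IsClosed ((Ks n : Set (EuclideanSpace ℝ (Fin d))) ∩ closedBall 0 R) :=
    fun n => (Ks n).isCompact.isClosed.inter isClosed_closedBall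
  have hys : ∀ n, ∃ y, y ∈ (Ks n : Set (EuclideanSpace ℝ (Fin d))) ∩ closedBall 0 R ∧
      dist x y ≤ r := by
    intro n
    have h := hmem n hx
    rw [(hclosed n).cthickening_eq_biUnion_closedBall hr] at h
    simp only [Set.mem_iUnion, mem_closedBall] at h
    obtain ⟨y, hy, hxy⟩ := h
    exact ⟨y, hy, hxy⟩
  choose y hy hxy using hys
  obtain ⟨z, hzB, φ, hφ, hconv⟩ :=
    (isCompact_closedBall (0 : EuclideanSpace ℝ (Fin d)) R).tendsto_subseq
      (fun n => (hy n).2)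
  -- z ∈ K
  have hdistK : Filter.Tendsto (fun n => dist (Ks (φ n)) K) Filter.atTop (nhds 0) := by
    have := (tendsto_iff_dist_tendsto_zero.1 hK).comp hφ.tendsto_atTop
    exact this
  have hfin : ∀ n, EMetric.hausdorffEdist (Ks (φ n) : Set (EuclideanSpace ℝ (Fin d)))
      (K : Set (EuclideanSpace ℝ (Fin d))) ≠ ⊤ := fun n =>
    Metric.hausdorffEdist_ne_top_of_nonempty_of_bounded (Ks (φ n)).nonempty K.nonempty
      (Ks (φ n)).isCompact.isBounded K.isCompact.isBounded
  have hinf : ∀ n, infDist z (K : Set (EuclideanSpace ℝ (Fin d))) ≤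
      dist z (y (φ n)) + dist (Ks (φ n)) K := by
    intro n
    calc infDist z (K : Set (EuclideanSpace ℝ (Fin d)))
        ≤ infDist (y (φ n)) (K : Set (EuclideanSpace ℝ (Fin d))) + dist z (y (φ n)) :=
          infDist_le_infDist_add_dist
      _ ≤ dist (Ks (φ n)) K + dist z (y (φ n)) := by
          gcongr
          exact Metric.infDist_le_hausdorffDist_of_mem (hy (φ n)).1 (hfin n)
      _ = dist z (y (φ n)) + dist (Ks (φ n)) K := add_comm _ _
  have hz0 : infDist z (K : Set (EuclideanSpace ℝ (Fin d))) = 0 := by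
    have hlim : Filter.Tendsto (fun n => dist z (y (φ n)) + dist (Ks (φ n)) K)
        Filter.atTop (nhds 0) := by
      have h1 : Filter.Tendsto (fun n => dist z (y (φ n))) Filter.atTop (nhds 0) := by
        simpa [dist_comm] using tendsto_iff_dist_tendsto_zero.1 hconv
      simpa using h1.add hdistK
    have := le_of_tendsto_of_tendsto' tendsto_const_nhds hlim hinf
    exact le_antisymm this (infDist_nonneg)
  have hzK : z ∈ (K : Set (EuclideanSpace ℝ (Fin d))) :=
    ((K.isCompact.isClosed.mem_iff_infDist_zero K.nonempty).2 hz0)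
  have hxz : dist x z ≤ r :=
    le_of_tendsto ((tendsto_const_nhds.dist hconv)) (Filter.Eventually.of_forall
      fun n => hxy (φ n))
  have hmem' : z ∈ (K : Set (EuclideanSpace ℝ (Fin d))) ∩ closedBall 0 R := ⟨hzK, hzB⟩
  exact closedBall_subset_cthickening hmem' r (mem_closedBall.2 hxz)
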